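/- γ_d ≥ 2α/(e·d·l·(l+1)), i.e. 1/γ_d ≤ d·l·(l+1)/(2α/e). -/

import Mathlib

open Finset

noncomputable section

/-- Mean of `f` with respect to the weight `μ` on a finite type. -/
def meanOf {n : Type*} [Fintype n] (μ : n → ℝ) (f : n → ℝ) : ℝ := ∑ x, μ x * f x

/-- Variance of `f` with respect to the weight `μ` on a finite type. -/
def varOf {n : Type*} [Fintype n] (μ : n → ℝ) (f : n → ℝ) : ℝ :=
  ∑ x, μ x * (f x - meanOf μ f) ^ 2

/-- Dirichlet form of the kernel `P` reversible w.r.t. `μ`. -/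
def dirOf {n : Type*} [Fintype n] (P : Matrix n n ℝ) (μ : n → ℝ) (f : n → ℝ) : ℝ :=
  (1 / 2) * ∑ x, ∑ y, μ x * P x y * (f x - f y) ^ 2

/-- Spectral gap of the kernel `P` reversible w.r.t. `μ`:
`min { D(f)/Var_μ(f) : Var_μ(f) ≠ 0 }`. -/
def gapOf {n : Type*} [Fintype n] (P : Matrix n n ℝ) (μ : n → ℝ) : ℝ :=
  sInf {r : ℝ | ∃ f : n → ℝ, varOf μ f ≠ 0 ∧ r = dirOf P μ f / varOf μ f}

/-- The box `{0,…,l}^d`. -/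
def Box (d l : ℕ) : Type := Fin d → Fin (l + 1)

instance (d l : ℕ) : Fintype (Box d l) := by unfold Box; infer_instance
instance (d l : ℕ) : DecidableEq (Box d l) := by unfold Box; infer_instance

/-- Nearest-neighbour adjacency in the box: `|x − y|₁ = 1`. -/
def adjB {d l : ℕ} (x y : Box d l) : Prop :=
  (∑ i, ((x i : ℤ) - (y i : ℤ)).natAbs) = 1

instance {d l : ℕ} (x y : Box d l) : Decidable (adjB x y) := by
  unfold adjB; infer_instance

/-- The nearest-neighbour random walk kernel on the box, with jump rate `α`. -/
def pBox (d l : ℕ) (α : ℝ) : Matrix (Box d l) (Box d l) ℝ :=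
  fun x y =>
    if x = y then 1 - α * (Finset.univ.filter fun z : Box d l => adjB x z).card
    else if adjB x y then α else 0

/-! ### Auxiliary machinery -/

/-- Unnormalized pair variance. -/
def VP {n : Type*} [Fintype n] (f : n → ℝ) : ℝ := ∑ x, ∑ y, (f x - f y)^2

lemma VP_nonneg {n : Type*} [Fintype n] (f : n → ℝ) : 0 ≤ VP f :=
  Finset.sum_nonneg fun _ _ => Finset.sum_nonneg fun _ _ => sq_nonneg _

lemma VP_eq {n : Type*} [Fintype n] (f : n → ℝ) :
    VP f = 2 * (Fintype.card n) * (∑ x, f x ^ 2) - 2 * (∑ x, f x)^2 := by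
  have h1 : ∀ x, ∑ y, (f x - f y)^2
      = (Fintype.card n) * f x ^ 2 - 2 * f x * (∑ y, f y) + ∑ y, f y ^ 2 := by
    intro x
    have e : ∀ y : n, (f x - f y)^2 = f x ^2 - 2 * f x * f y + f y ^2 := fun y => by ring
    rw [Finset.sum_congr rfl fun y _ => e y, Finset.sum_add_distrib, Finset.sum_sub_distrib,
      Finset.sum_const, ← Finset.mul_sum, Finset.card_univ, nsmul_eq_mul]
  rw [VP, Finset.sum_congr rfl fun x _ => h1 x, Finset.sum_add_distrib, Finset.sum_sub_distrib,
    Finset.sum_const, Finset.card_univ, nsmul_eq_mul, ← Finset.sum_mul, ← Finset.mul_sum,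
    ← Finset.mul_sum]
  ring

lemma VP_sum_le {A B : Type*} [Fintype A] [Fintype B] (F : A → B → ℝ) :
    VP (fun b => ∑ a, F a b) ≤ (Fintype.card A) * ∑ a, VP (F a) := by
  have step : ∀ b b' : B,
      ((∑ a, F a b) - ∑ a, F a b')^2 ≤ (Fintype.card A) * ∑ a, (F a b - F a b')^2 := by
    intro b b'
    rw [← Finset.sum_sub_distrib]
    have := sq_sum_le_card_mul_sum_sq (s := (univ : Finset A)) (f := fun a => F a b - F a b')
    simpa [Finset.card_univ] using this
  calc VP (fun b => ∑ a, F a b)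
      ≤ ∑ b : B, ∑ b' : B, (Fintype.card A) * ∑ a, (F a b - F a b')^2 := by
        apply Finset.sum_le_sum; intro b _; apply Finset.sum_le_sum; intro b' _; exact step b b'
    _ = (Fintype.card A) * ∑ a, VP (F a) := by
        simp_rw [← Finset.mul_sum]
        congr 1
        rw [Finset.sum_congr rfl fun b _ =>
          Finset.sum_comm (s := (univ : Finset B)) (t := (univ : Finset A)), Finset.sum_comm]
        rfl

lemma VP_prod_eq {A B : Type*} [Fintype A] [Fintype B] (F : A → B → ℝ) :
    VP (fun p : A × B => F p.1 p.2)
      = (Fintype.card B) * ∑ b, VP (fun a => F a b) + VP (fun b => ∑ a, F a b) := by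
  rw [VP_eq (fun p : A × B => F p.1 p.2), VP_eq (fun b => ∑ a, F a b),
    Finset.sum_congr rfl fun b (_ : b ∈ univ) => VP_eq (fun a => F a b)]
  rw [Fintype.sum_prod_type, Fintype.sum_prod_type, Fintype.card_prod]
  rw [Finset.sum_sub_distrib, ← Finset.mul_sum, ← Finset.mul_sum]
  have c1 : ∑ b : B, (∑ a : A, F a b ^ 2) = ∑ a : A, ∑ b : B, F a b ^2 := Finset.sum_comm
  have c2 : ∑ b : B, (∑ a : A, F a b) = ∑ a : A, ∑ b : B, F a b := Finset.sum_comm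
  rw [c1, c2]
  push_cast
  ring

lemma VP_tensor {A B : Type*} [Fintype A] [Fintype B] (F : A → B → ℝ) :
    VP (fun p : A × B => F p.1 p.2)
      ≤ (Fintype.card B) * ∑ b, VP (fun a => F a b) + (Fintype.card A) * ∑ a, VP (F a) := by
  rw [VP_prod_eq]
  have := VP_sum_le F
  linarith

/-! ### One-dimensional estimates -/

def bump1 {l : ℕ} (a : Fin (l+1)) : Fin (l+1) := ⟨min ((a : ℕ)+1) l, by omega⟩

def SInc {l : ℕ} (g : Fin (l+1) → ℝ) : ℝ :=
  ∑ a : Fin (l+1), if (a:ℕ) < l then (g (bump1 a) - g a)^2 else 0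

lemma oneD {l : ℕ} (g : Fin (l+1) → ℝ) :
    VP g ≤ ((l:ℝ)+1)^2 * ((l:ℝ) * SInc g) := by
  set G : ℕ → ℝ := fun n => g ⟨min n l, by omega⟩ with hGdef
  have hG : ∀ a : Fin (l+1), g a = G (a:ℕ) := by
    intro a
    have : (⟨min (a:ℕ) l, by omega⟩ : Fin (l+1)) = a := by
      apply Fin.ext; simp; omega
    simp [hGdef, this]
  have hInc : SInc g = ∑ k ∈ Finset.range l, (G (k+1) - G k)^2 := by
    have h1 : ∀ a : Fin (l+1), (if (a:ℕ) < l then (g (bump1 a) - g a)^2 else 0)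
        = (fun k => if k < l then (G (k+1) - G k)^2 else 0) (a : ℕ) := by
      intro a
      by_cases h : (a:ℕ) < l
      · simp only [h, if_true]
        have hb : g (bump1 a) = G ((a:ℕ)+1) := rfl
        rw [hb, hG a]
      · simp [h]
    rw [SInc, Finset.sum_congr rfl fun a _ => h1 a,
      Fin.sum_univ_eq_sum_range (fun k => if k < l then (G (k+1) - G k)^2 else 0) (l+1),
      Finset.sum_range_succ]
    simp only [lt_irrefl, if_false, add_zero]
    apply Finset.sum_congr rfl
    intro k hk
    rw [if_pos (Finset.mem_range.mp hk)]
  have hpt : ∀ a b : Fin (l+1), (g a - g b)^2 ≤ (l:ℝ) * SInc g := by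
    have main : ∀ m n : ℕ, n ≤ m → m ≤ l → (G m - G n)^2 ≤ (l:ℝ) * SInc g := by
      intro m n hnm hml
      have tel : G m - G n = ∑ k ∈ Finset.Ico n m, (G (k+1) - G k) := by
        rw [Finset.sum_Ico_eq_sub _ hnm, Finset.sum_range_sub, Finset.sum_range_sub]
        ring
      have cs := sq_sum_le_card_mul_sum_sq (s := Finset.Ico n m) (f := fun k => G (k+1) - G k)
      have hcard : ((Finset.Ico n m).card : ℝ) ≤ (l:ℝ) := by
        rw [Nat.card_Ico]; exact_mod_cast le_trans (Nat.sub_le m n) hml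
      have hsub : ∑ k ∈ Finset.Ico n m, (G (k+1) - G k)^2
          ≤ ∑ k ∈ Finset.range l, (G (k+1) - G k)^2 := by
        apply Finset.sum_le_sum_of_subset_of_nonneg
        · intro k hk
          rw [Finset.mem_range]
          rw [Finset.mem_Ico] at hk
          omega
        · intros; positivity
      rw [tel, hInc]
      calc (∑ k ∈ Finset.Ico n m, (G (k+1) - G k))^2
          ≤ ((Finset.Ico n m).card : ℝ) * ∑ k ∈ Finset.Ico n m, (G (k+1) - G k)^2 := cs
        _ ≤ (l:ℝ) * ∑ k ∈ Finset.range l, (G (k+1) - G k)^2 := by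
            apply mul_le_mul hcard hsub (Finset.sum_nonneg fun _ _ => sq_nonneg _) (by positivity)
    intro a b
    rcases le_total (b:ℕ) (a:ℕ) with h | h
    · rw [hG a, hG b]; exact main _ _ h (by omega)
    · rw [hG a, hG b, show (G a - G b)^2 = (G b - G a)^2 by ring]
      exact main _ _ h (by omega)
  calc VP g ≤ ∑ _a : Fin (l+1), ∑ _b : Fin (l+1), (l:ℝ) * SInc g := by
        apply Finset.sum_le_sum; intro a _; apply Finset.sum_le_sum; intro b _; exact hpt a b
    _ = ((l:ℝ)+1)^2 * ((l:ℝ) * SInc g) := by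
        simp [Finset.sum_const, Finset.card_univ]
        ring

/-! ### Box machinery -/

def bump {d l : ℕ} (i : Fin d) (x : Box d l) : Box d l :=
  Function.update x i ⟨min ((x i : ℕ)+1) l, by omega⟩

def TT (d l : ℕ) (f : Box d l → ℝ) : ℝ :=
  ∑ i : Fin d, ∑ x : Box d l, if ((x i : ℕ) < l) then (f (bump i x) - f x)^2 else 0

lemma TT_nonneg (d l : ℕ) (f : Box d l → ℝ) : 0 ≤ TT d l f := by
  apply Finset.sum_nonneg; intro i _; apply Finset.sum_nonneg; intro x _
  split <;> positivity

lemma cardBox (d l : ℕ) : (Fintype.card (Box d l)) = (l+1)^d := by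
  show Fintype.card (Fin d → Fin (l+1)) = (l+1)^d
  rw [Fintype.card_fun, Fintype.card_fin, Fintype.card_fin]

lemma sum_cons (d l : ℕ) (h : Box (d+1) l → ℝ) :
    ∑ x : Box (d+1) l, h x = ∑ a : Fin (l+1), ∑ b : Box d l, h (Fin.cons a b) := by
  have e := Fintype.sum_equiv (Fin.consEquiv fun _ : Fin (d+1) => Fin (l+1))
    (fun p => h (Fin.cons p.1 p.2)) h (fun p => rfl)
  calc ∑ x : Box (d+1) l, h x
      = ∑ p : Fin (l+1) × (Fin d → Fin (l+1)), h (Fin.cons p.1 p.2) := e.symm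
    _ = ∑ a : Fin (l+1), ∑ b : Fin d → Fin (l+1), h (Fin.cons a b) := Fintype.sum_prod_type _
    _ = ∑ a : Fin (l+1), ∑ b : Box d l, h (Fin.cons a b) := rfl

lemma bump_cons_zero {d l : ℕ} (a : Fin (l+1)) (b : Box d l) :
    bump (0 : Fin (d+1)) (Fin.cons a b : Box (d+1) l) = Fin.cons (bump1 a) b := by
  unfold bump bump1
  exact Fin.update_cons_zero (α := fun _ : Fin (d+1) => Fin (l+1)) a b _

lemma bump_cons_succ {d l : ℕ} (i : Fin d) (a : Fin (l+1)) (b : Box d l) :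
    bump i.succ (Fin.cons a b : Box (d+1) l) = Fin.cons a (bump i b) := by
  unfold bump
  exact (Fin.cons_update (α := fun _ : Fin (d+1) => Fin (l+1)) a b i _).symm

lemma TT_succ (d l : ℕ) (f : Box (d+1) l → ℝ) :
    TT (d+1) l f = (∑ b : Box d l, SInc (fun a => f (Fin.cons a b)))
      + ∑ a : Fin (l+1), TT d l (fun b => f (Fin.cons a b)) := by
  rw [TT, Fin.sum_univ_succ]
  congr 1
  · rw [sum_cons d l (fun x => if ((x 0 : ℕ) < l) then (f (bump 0 x) - f x)^2 else 0)]
    rw [Finset.sum_comm]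
    apply Finset.sum_congr rfl; intro b _
    rw [SInc]
    apply Finset.sum_congr rfl; intro a _
    rw [bump_cons_zero]; rfl
  · rw [Finset.sum_congr rfl fun i (_ : i ∈ univ) => sum_cons d l
      (fun x => if ((x i.succ : ℕ) < l) then (f (bump i.succ x) - f x)^2 else 0),
      Finset.sum_comm]
    apply Finset.sum_congr rfl; intro a _
    rw [TT]
    apply Finset.sum_congr rfl; intro i _
    apply Finset.sum_congr rfl; intro b _
    rw [bump_cons_succ]; rfl

lemma key (l : ℕ) : ∀ (d : ℕ) (f : Box d l → ℝ),
    VP f ≤ (l : ℝ) * ((l:ℝ)+1)^(d+1) * TT d l f := by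
  intro d
  induction d with
  | zero =>
    intro f
    have h0 : VP f = 0 := by
      rw [VP]
      apply Finset.sum_eq_zero; intro x _
      apply Finset.sum_eq_zero; intro y _
      have hxy : x = y := funext fun i => i.elim0
      rw [hxy]; ring
    rw [h0]
    have := TT_nonneg 0 l f
    positivity
  | succ d ih =>
    intro f
    have hVP : VP f = VP (fun p : Fin (l+1) × Box d l => f (Fin.cons p.1 p.2)) := by
      rw [VP, VP, Fintype.sum_prod_type, sum_cons d l (fun x => ∑ y, (f x - f y)^2)]
      apply Finset.sum_congr rfl; intro a _
      apply Finset.sum_congr rfl; intro b _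
      rw [Fintype.sum_prod_type, sum_cons d l (fun y => (f (Fin.cons a b) - f y)^2)]
    have htensor := VP_tensor (fun (a : Fin (l+1)) (b : Box d l) => f (Fin.cons a b))
    have h1 : ∑ b : Box d l, VP (fun a => f (Fin.cons a b))
        ≤ ((l:ℝ)+1)^2 * ((l:ℝ) * ∑ b : Box d l, SInc (fun a => f (Fin.cons a b))) := by
      calc ∑ b : Box d l, VP (fun a => f (Fin.cons a b))
          ≤ ∑ b : Box d l, ((l:ℝ)+1)^2 * ((l:ℝ) * SInc (fun a => f (Fin.cons a b))) :=
            Finset.sum_le_sum fun b _ => oneD _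
        _ = ((l:ℝ)+1)^2 * ((l:ℝ) * ∑ b : Box d l, SInc (fun a => f (Fin.cons a b))) := by
            rw [← Finset.mul_sum, ← Finset.mul_sum]
    have h2 : ∑ a : Fin (l+1), VP (fun b => f (Fin.cons a b))
        ≤ (l:ℝ) * ((l:ℝ)+1)^(d+1) * ∑ a : Fin (l+1), TT d l (fun b => f (Fin.cons a b)) := by
      calc ∑ a : Fin (l+1), VP (fun b => f (Fin.cons a b))
          ≤ ∑ a : Fin (l+1), (l:ℝ) * ((l:ℝ)+1)^(d+1) * TT d l (fun b => f (Fin.cons a b)) :=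
            Finset.sum_le_sum fun a _ => ih _
        _ = (l:ℝ) * ((l:ℝ)+1)^(d+1) * ∑ a : Fin (l+1), TT d l (fun b => f (Fin.cons a b)) := by
            rw [← Finset.mul_sum]
    have hcB : ((Fintype.card (Box d l)) : ℝ) = ((l:ℝ)+1)^d := by
      rw [cardBox]; push_cast; ring
    have hcA : ((Fintype.card (Fin (l+1))) : ℝ) = (l:ℝ)+1 := by
      rw [Fintype.card_fin]; push_cast; ring
    have hS1 : 0 ≤ ∑ b : Box d l, SInc (fun a => f (Fin.cons a b)) := by
      apply Finset.sum_nonneg; intro b _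
      apply Finset.sum_nonneg; intro a _; split <;> positivity
    have hS2 : 0 ≤ ∑ a : Fin (l+1), TT d l (fun b => f (Fin.cons a b)) :=
      Finset.sum_nonneg fun a _ => TT_nonneg d l _
    rw [hVP, TT_succ]
    calc VP (fun p : Fin (l+1) × Box d l => f (Fin.cons p.1 p.2))
        ≤ (Fintype.card (Box d l)) * ∑ b, VP (fun a => f (Fin.cons a b))
          + (Fintype.card (Fin (l+1))) * ∑ a, VP (fun b => f (Fin.cons a b)) := htensor
      _ ≤ (Fintype.card (Box d l)) *
            (((l:ℝ)+1)^2 * ((l:ℝ) * ∑ b : Box d l, SInc (fun a => f (Fin.cons a b))))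
          + (Fintype.card (Fin (l+1))) *
            ((l:ℝ) * ((l:ℝ)+1)^(d+1) * ∑ a : Fin (l+1), TT d l (fun b => f (Fin.cons a b))) := by
          apply add_le_add
          · exact mul_le_mul_of_nonneg_left h1 (by positivity)
          · exact mul_le_mul_of_nonneg_left h2 (by positivity)
      _ = (l:ℝ) * ((l:ℝ)+1)^(d+1+1) *
            ((∑ b : Box d l, SInc (fun a => f (Fin.cons a b)))
              + ∑ a : Fin (l+1), TT d l (fun b => f (Fin.cons a b))) := by
          rw [hcB, hcA]
          ring

/-! ### Adjacency counting -/

lemma adjB_irrefl {d l : ℕ} (x : Box d l) : ¬ adjB x x := by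
  unfold adjB; simp

lemma adjB_symm {d l : ℕ} {x y : Box d l} (h : adjB x y) : adjB y x := by
  unfold adjB at *
  calc ∑ i, ((y i : ℤ) - (x i : ℤ)).natAbs
      = ∑ i, ((x i : ℤ) - (y i : ℤ)).natAbs :=
        Finset.sum_congr rfl fun i _ => by omega
    _ = 1 := h

lemma bump_coord {d l : ℕ} (i : Fin d) (x : Box d l) (h : (x i : ℕ) < l) :
    ((bump i x i : ℕ)) = (x i : ℕ) + 1 := by
  unfold bump; erw [Function.update_self]; simp; omega

lemma bump_ne {d l : ℕ} (i j : Fin d) (x : Box d l) (h : j ≠ i) : bump i x j = x j := by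
  unfold bump; erw [Function.update_of_ne h]

lemma adjB_bump {d l : ℕ} (i : Fin d) (x : Box d l) (h : (x i : ℕ) < l) :
    adjB x (bump i x) := by
  unfold adjB
  rw [Finset.sum_eq_single i]
  · have := bump_coord i x h; omega
  · intro j _ hj; rw [bump_ne i j x hj]; simp
  · intro hi; exact absurd (Finset.mem_univ i) hi

lemma sum_bump {d l : ℕ} (i : Fin d) (x : Box d l) (h : (x i : ℕ) < l) :
    ∑ j, ((bump i x) j : ℕ) = (∑ j, (x j : ℕ)) + 1 := by
  have he : ∑ j ∈ univ.erase i, ((bump i x) j : ℕ) = ∑ j ∈ univ.erase i, (x j : ℕ) :=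
    Finset.sum_congr rfl fun j hj => by rw [bump_ne i j x (Finset.ne_of_mem_erase hj)]
  rw [← Finset.add_sum_erase _ (fun j => ((bump i x) j : ℕ)) (Finset.mem_univ i),
    ← Finset.add_sum_erase _ (fun j => ((x j : ℕ))) (Finset.mem_univ i), he, bump_coord i x h]
  omega

lemma adjsum_ge (d l : ℕ) (f : Box d l → ℝ) :
    2 * TT d l f ≤ ∑ x : Box d l, ∑ y : Box d l, (if adjB x y then (f x - f y)^2 else 0) := by
  classical
  set w : Box d l × Box d l → ℝ := fun p => (f p.1 - f p.2)^2 with hw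
  set I : Finset (Fin d × Box d l) := univ.filter (fun q => (q.2 q.1 : ℕ) < l) with hI
  set E : Finset (Box d l × Box d l) := univ.filter (fun p => adjB p.1 p.2) with hE
  have hqI : ∀ q ∈ I, ((q.2 q.1 : ℕ) < l) := fun q hq => (Finset.mem_filter.mp hq).2
  have hRHS : ∑ p ∈ E, w p
      = ∑ x : Box d l, ∑ y : Box d l, (if adjB x y then (f x - f y)^2 else 0) := by
    rw [hE, Finset.sum_filter, Fintype.sum_prod_type]
  have hTT : ∑ q ∈ I, (f (bump q.1 q.2) - f q.2)^2 = TT d l f := by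
    rw [hI, Finset.sum_filter, Fintype.sum_prod_type, TT]
  set φ : Fin d × Box d l → Box d l × Box d l := fun q => (q.2, bump q.1 q.2) with hφ
  set ψ : Fin d × Box d l → Box d l × Box d l := fun q => (bump q.1 q.2, q.2) with hψ
  have hinj : ∀ (u : Fin d × Box d l), u ∈ I → ∀ v ∈ I,
      (u.2 = v.2) → bump u.1 u.2 = bump v.1 v.2 → u = v := by
    rintro ⟨i, x⟩ hu ⟨i', x'⟩ hv h2 hbump
    dsimp at h2; subst h2
    have hxi := hqI _ hu
    have hxi' := hqI _ hv
    dsimp at hxi hxi' hbump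
    have : i = i' := by
      by_contra hne
      have e1 := congrFun hbump i
      rw [bump_ne i' i x (by exact hne)] at e1
      have e2 : ((bump i x i : ℕ)) = (x i : ℕ) := by rw [e1]
      rw [bump_coord i x hxi] at e2
      omega
    subst this; rfl
  have hinjφ : ∀ u ∈ I, ∀ v ∈ I, φ u = φ v → u = v := by
    intro u hu v hv h
    simp only [hφ, Prod.mk.injEq] at h
    exact hinj u hu v hv h.1 h.2
  have hinjψ : ∀ u ∈ I, ∀ v ∈ I, ψ u = ψ v → u = v := by
    intro u hu v hv h
    simp only [hψ, Prod.mk.injEq] at h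
    exact hinj u hu v hv h.2 h.1
  have hsubφ : I.image φ ⊆ E := by
    intro p hp
    obtain ⟨q, hq, rfl⟩ := Finset.mem_image.mp hp
    rw [hE, Finset.mem_filter]
    exact ⟨Finset.mem_univ _, adjB_bump q.1 q.2 (hqI q hq)⟩
  have hsubψ : I.image ψ ⊆ E := by
    intro p hp
    obtain ⟨q, hq, rfl⟩ := Finset.mem_image.mp hp
    rw [hE, Finset.mem_filter]
    exact ⟨Finset.mem_univ _, adjB_symm (adjB_bump q.1 q.2 (hqI q hq))⟩
  have hdisj : Disjoint (I.image φ) (I.image ψ) := by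
    rw [Finset.disjoint_left]
    intro p hp1 hp2
    obtain ⟨q, hq, hpq⟩ := Finset.mem_image.mp hp1
    obtain ⟨q', hq', hpq'⟩ := Finset.mem_image.mp hp2
    have c1 := sum_bump q.1 q.2 (hqI q hq)
    have c2 := sum_bump q'.1 q'.2 (hqI q' hq')
    have e1 : bump q'.1 q'.2 = q.2 := by
      have := congrArg Prod.fst (hpq'.trans hpq.symm); exact this
    have e2 : q'.2 = bump q.1 q.2 := by
      have := congrArg Prod.snd (hpq'.trans hpq.symm); exact this
    have d1 := congrArg (fun z : Box d l => ∑ j, (z j : ℕ)) e1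
    have d2 := congrArg (fun z : Box d l => ∑ j, (z j : ℕ)) e2
    try dsimp at d1 d2
    omega
  have hwnonneg : ∀ p ∈ E, p ∉ I.image φ ∪ I.image ψ → 0 ≤ w p := by
    intro p _ _; rw [hw]; positivity
  have hunion : I.image φ ∪ I.image ψ ⊆ E := Finset.union_subset hsubφ hsubψ
  have hle : ∑ p ∈ I.image φ ∪ I.image ψ, w p ≤ ∑ p ∈ E, w p :=
    Finset.sum_le_sum_of_subset_of_nonneg hunion hwnonneg
  have hsplit : ∑ p ∈ I.image φ ∪ I.image ψ, w p
      = ∑ p ∈ I.image φ, w p + ∑ p ∈ I.image ψ, w p := Finset.sum_union hdisj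
  have h3 : ∑ p ∈ I.image φ, w p = ∑ q ∈ I, (f (bump q.1 q.2) - f q.2)^2 := by
    rw [Finset.sum_image hinjφ]
    apply Finset.sum_congr rfl; intro q _
    simp only [hw, hφ]; ring
  have h4 : ∑ p ∈ I.image ψ, w p = ∑ q ∈ I, (f (bump q.1 q.2) - f q.2)^2 := by
    rw [Finset.sum_image hinjψ]
  rw [← hRHS, ← hTT]
  linarith

/-! ### Bridges to `varOf`, `dirOf` -/

lemma varOf_eq_VP {n : Type*} [Fintype n] (f : n → ℝ) (N : ℝ)
    (hN : ((Fintype.card n) : ℝ) = N) (hN0 : 0 < N) :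
    varOf (fun _ => 1/N) f = VP f / (2 * N^2) := by
  have hmean : meanOf (fun _ : n => 1/N) f = (∑ x, f x)/N := by
    rw [meanOf, ← Finset.mul_sum]; ring
  rw [varOf, hmean, VP_eq, hN, ← Finset.mul_sum]
  have hexp : ∑ x, (f x - (∑ x, f x)/N)^2
      = (∑ x, f x ^2) - 2*((∑ x, f x)/N)*(∑ x, f x) + N*((∑ x, f x)/N)^2 := by
    have e : ∀ x : n, (f x - (∑ x, f x)/N)^2
        = f x^2 - 2*((∑ x, f x)/N)*f x + ((∑ x, f x)/N)^2 := fun x => by ring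
    rw [Finset.sum_congr rfl fun x _ => e x, Finset.sum_add_distrib, Finset.sum_sub_distrib,
      Finset.sum_const, Finset.card_univ, nsmul_eq_mul, hN, ← Finset.mul_sum]
  rw [hexp]
  field_simp
  ring

lemma varOf_nonneg {n : Type*} [Fintype n] (f : n → ℝ) (N : ℝ) (hN0 : 0 < N) :
    0 ≤ varOf (fun _ => 1/N) f := by
  apply Finset.sum_nonneg; intro x _; positivity

lemma dirOf_eq (d l : ℕ) (α N : ℝ) (f : Box d l → ℝ) :
    dirOf (pBox d l α) (fun _ => 1/N) f
      = (α/(2*N)) * ∑ x : Box d l, ∑ y : Box d l, (if adjB x y then (f x - f y)^2 else 0) := by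
  have hpt : ∀ x y : Box d l, (1/N) * pBox d l α x y * (f x - f y)^2
      = (α/N) * (if adjB x y then (f x - f y)^2 else 0) := by
    intro x y
    by_cases hxy : x = y
    · subst hxy
      simp [adjB_irrefl x]
    · by_cases hadj : adjB x y
      · simp only [pBox, if_neg hxy, if_pos hadj]; ring
      · simp only [pBox, if_neg hxy, if_neg hadj]; ring
  rw [dirOf,
    Finset.sum_congr rfl fun x (_ : x ∈ univ) => Finset.sum_congr rfl fun y (_ : y ∈ univ) => hpt x y]
  rw [Finset.sum_congr rfl fun x (_ : x ∈ univ) =>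
    (Finset.mul_sum (univ : Finset (Box d l)) (fun y => if adjB x y then (f x - f y)^2 else 0) ((α/N))).symm,
    ← Finset.mul_sum]
  ring

/-- Lemma 7.5, first part: the spectral gap of the random walk on `{0,…,l}^d` with
nearest-neighbour rate `α` satisfies `γ_d ≥ 2α/(e·d·l·(l+1))`. -/
theorem box_walk_gap_lower_bound
    (d l : ℕ) (hd : 1 ≤ d) (hl : 1 ≤ l)
    (α : ℝ) (hα : 0 < α) (hα' : α ≤ 1 / (2 * d)) :
    gapOf (pBox d l α) (fun _ : Box d l => 1 / (l + 1) ^ d)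
      ≥ 2 * α / (Real.exp 1 * d * l * (l + 1)) := by
  classical
  have hl1 : (1:ℝ) ≤ (l:ℝ) := by exact_mod_cast hl
  have hd1 : (1:ℝ) ≤ (d:ℝ) := by exact_mod_cast hd
  have he1 : (1:ℝ) ≤ Real.exp 1 := by
    have := Real.add_one_le_exp (1:ℝ); linarith
  set N : ℝ := ((l:ℝ)+1)^d with hNdef
  have hN0 : 0 < N := by positivity
  have hcard : ((Fintype.card (Box d l)) : ℝ) = N := by
    rw [cardBox]; push_cast; ring
  have hμ : (fun _ : Box d l => 1 / ((l:ℝ) + 1) ^ d) = (fun _ : Box d l => 1/N) := rfl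
  rw [ge_iff_le, gapOf, hμ]
  -- the nontrivial function
  have hwitness : ∃ f : Box d l → ℝ, varOf (fun _ : Box d l => 1/N) f ≠ 0 := by
    refine ⟨fun x => ((x ⟨0, hd⟩ : ℕ) : ℝ), ?_⟩
    intro h0
    set f0 : Box d l → ℝ := fun x => ((x ⟨0, hd⟩ : ℕ) : ℝ) with hf0
    have hterm := (Finset.sum_eq_zero_iff_of_nonneg
      (fun x (_ : x ∈ univ) => by positivity :
        ∀ x ∈ (univ : Finset (Box d l)), 0 ≤ (1/N) * (f0 x - meanOf (fun _ => 1/N) f0)^2)).mp h0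
    have hconst : ∀ x : Box d l, f0 x = meanOf (fun _ : Box d l => 1/N) f0 := by
      intro x
      have hx := hterm x (Finset.mem_univ x)
      have h1N : (1/N : ℝ) ≠ 0 := by positivity
      have := mul_eq_zero.mp hx
      rcases this with h | h
      · exact absurd h h1N
      · have := pow_eq_zero_iff (n := 2) (by norm_num) |>.mp h
        linarith [this]
    have e0 := hconst (fun _ => ⟨0, by omega⟩)
    have e1 := hconst (fun _ => ⟨1, by omega⟩)
    rw [hf0] at e0 e1
    simp at e0 e1
    rw [← e0] at e1
    norm_num at e1
  obtain ⟨fw, hfw⟩ := hwitness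
  apply le_csInf
  case h₁ => exact ⟨_, fw, hfw, rfl⟩
  rintro r ⟨f, hvar, rfl⟩
  have hvpos : 0 < varOf (fun _ : Box d l => 1/N) f :=
    lt_of_le_of_ne (varOf_nonneg f N hN0) (Ne.symm hvar)
  have hVar := varOf_eq_VP f N hcard hN0
  have hDir := dirOf_eq d l α N f
  have hkey := key l d f
  have hadj := adjsum_ge d l f
  have hTT0 := TT_nonneg d l f
  -- varOf ≤ (l(l+1)/(2N)) TT
  have hA : varOf (fun _ : Box d l => 1/N) f ≤ ((l:ℝ)*((l:ℝ)+1)/(2*N)) * TT d l f := by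
    rw [hVar]
    calc VP f / (2*N^2) ≤ ((l:ℝ)*((l:ℝ)+1)^(d+1) * TT d l f) / (2*N^2) := by
          apply div_le_div_of_nonneg_right hkey ?_ |>.trans_eq rfl
          positivity
      _ = ((l:ℝ)*((l:ℝ)+1)/(2*N)) * TT d l f := by
          rw [hNdef, pow_succ]
          field_simp
          try ring
  have hB : (α/N) * TT d l f ≤ dirOf (pBox d l α) (fun _ : Box d l => 1/N) f := by
    rw [hDir]
    calc (α/N) * TT d l f = (α/(2*N)) * (2 * TT d l f) := by ring
      _ ≤ (α/(2*N)) * ∑ x : Box d l, ∑ y : Box d l, (if adjB x y then (f x - f y)^2 else 0) := by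
          apply mul_le_mul_of_nonneg_left hadj (by positivity)
  rw [le_div_iff₀ hvpos]
  have hc : 2*α/(Real.exp 1 * d * l * (l+1)) ≤ 2*α/((l:ℝ)*((l:ℝ)+1)) := by
    rw [div_le_div_iff₀ (by positivity) (by positivity)]
    have hed : (1:ℝ) ≤ Real.exp 1 * d := by nlinarith
    nlinarith [mul_le_mul_of_nonneg_right hed
      (by positivity : (0:ℝ) ≤ 2*α*((l:ℝ)*((l:ℝ)+1)))]
  calc 2*α/(Real.exp 1 * d * l * (l+1)) * varOf (fun _ : Box d l => 1/N) f
      ≤ 2*α/((l:ℝ)*((l:ℝ)+1)) * varOf (fun _ : Box d l => 1/N) f :=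
        mul_le_mul_of_nonneg_right hc hvpos.le
    _ ≤ 2*α/((l:ℝ)*((l:ℝ)+1)) * (((l:ℝ)*((l:ℝ)+1)/(2*N)) * TT d l f) := by
        apply mul_le_mul_of_nonneg_left hA (by positivity)
    _ = (α/N) * TT d l f := by
        field_simp
        try ring
    _ ≤ dirOf (pBox d l α) (fun _ : Box d l => 1/N) f := hB
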